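/- Let k ≥ 3 be an integer, R > 0, ξ = 2π/(3k) and r = R·cos ξ, and let P_0,…,P_{k−1} be the pearl regions. Then for all i ≠ j, every y ∈ P_i and every z ∈ P_j, the point z does not lie in the open disk whose diameter is the segment from the origin to y; that is, |z − y/2| ≥ |y|/2. -/

import Mathlib

set_option maxHeartbeats 1000000


open MeasureTheory Real

noncomputable section

/-- The Euclidean plane. -/
abbrev E2 := EuclideanSpace ℝ (Fin 2)

/-- The polar angle of a point of the plane, normalized to lie in `[0, 2π)` for
nonzero points. -/
def polarAngle (z : E2) : ℝ :=
  if Complex.arg ⟨z 0, z 1⟩ < 0 then Complex.arg ⟨z 0, z 1⟩ + 2 * π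
  else Complex.arg ⟨z 0, z 1⟩

/-- With `ξ = 2π/(3k)` and `r = R cos ξ`, the `i`-th pearl region is the set of points
`z` with `r ≤ |z| ≤ R` whose polar angle lies in `[3iξ, (3i+2)ξ)`. -/

lemma aux_cos_lt {ξ a : ℝ} (hξ : 0 < ξ) (hξπ : ξ < π) (h1 : ξ < a) (h2 : a < 2 * π - ξ) :
    Real.cos a < Real.cos ξ := by
  rcases le_or_gt a π with h | h
  · exact Real.cos_lt_cos_of_nonneg_of_le_pi hξ.le h h1
  · have : Real.cos (2 * π - a) < Real.cos ξ := by
      apply Real.cos_lt_cos_of_nonneg_of_le_pi hξ.le (by linarith) (by linarith)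
    rwa [Real.cos_two_pi_sub] at this

lemma aux_abs (z : E2) : ‖(⟨z 0, z 1⟩ : ℂ)‖ = ‖z‖ := by
  rw [EuclideanSpace.norm_eq, Fin.sum_univ_two, Complex.norm_def, Complex.normSq_mk]
  simp [sq_abs, pow_two]

lemma aux_inner (y z : E2) (hy : y ≠ 0) (hz : z ≠ 0) :
    (inner ℝ z y : ℝ) = ‖z‖ * ‖y‖ * Real.cos (polarAngle z - polarAngle y) := by
  set yc : ℂ := ⟨y 0, y 1⟩ with hyc
  set zc : ℂ := ⟨z 0, z 1⟩ with hzc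
  have hay : ‖yc‖ = ‖y‖ := aux_abs y
  have haz : ‖zc‖ = ‖z‖ := aux_abs z
  have hy0 : ‖y‖ ≠ 0 := norm_ne_zero_iff.2 hy
  have hz0 : ‖z‖ ≠ 0 := norm_ne_zero_iff.2 hz
  have hyc0 : yc ≠ 0 := by intro h; apply hy0; rw [← hay, h, norm_zero]
  have hzc0 : zc ≠ 0 := by intro h; apply hz0; rw [← haz, h, norm_zero]
  have hcosP : Real.cos (polarAngle z - polarAngle y)
      = Real.cos (Complex.arg zc - Complex.arg yc) := by
    unfold polarAngle
    rw [← hyc, ← hzc]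
    split_ifs with h1 h2 h2
    · rw [show zc.arg + 2 * π - (yc.arg + 2 * π) = zc.arg - yc.arg from by ring]
    · rw [show zc.arg + 2 * π - yc.arg = (zc.arg - yc.arg) + 2 * π from by ring,
        Real.cos_add_two_pi]
    · rw [show zc.arg - (yc.arg + 2 * π) = (zc.arg - yc.arg) - 2 * π from by ring,
        Real.cos_sub_two_pi]
    · rfl
  rw [hcosP, Real.cos_sub, Complex.cos_arg hzc0, Complex.sin_arg, Complex.cos_arg hyc0,
    Complex.sin_arg, hay, haz]
  have hre_y : yc.re = y 0 := rfl
  have hre_z : zc.re = z 0 := rfl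
  have him_y : yc.im = y 1 := rfl
  have him_z : zc.im = z 1 := rfl
  rw [hre_y, hre_z, him_y, him_z]
  have : (inner ℝ z y : ℝ) = z 0 * y 0 + z 1 * y 1 := by
    simp [PiLp.inner_apply, Fin.sum_univ_two, RCLike.inner_apply, mul_comm]
  rw [this]
  field_simp

def pearl (k : ℕ) (R : ℝ) (i : ℕ) : Set E2 :=
  {z | R * Real.cos (2 * π / (3 * k)) ≤ ‖z‖ ∧ ‖z‖ ≤ R ∧
    polarAngle z ∈ Set.Ico (3 * i * (2 * π / (3 * k))) ((3 * i + 2) * (2 * π / (3 * k)))}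

/-- For `k ≥ 3`, `R > 0`, and distinct pearl regions `P i` and `P j`
(`i, j < k`), no point `z ∈ P j` lies in the open disk whose diameter is the segment
from the origin to a point `y ∈ P i`; that is, `|z − y/2| ≥ |y|/2`. -/
theorem pearl_regions_avoid_disks (k : ℕ) (hk : 3 ≤ k) (R : ℝ) (hR : 0 < R)
    (i j : ℕ) (hi : i < k) (hj : j < k) (hij : i ≠ j)
    (y z : E2) (hy : y ∈ pearl k R i) (hz : z ∈ pearl k R j) :
    ‖y‖ / 2 ≤ ‖z - (1/2 : ℝ) • y‖ := by
  obtain ⟨hy1, hy2, hy3, hy4⟩ := hy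
  obtain ⟨hz1, hz2, hz3, hz4⟩ := hz
  set ξ := 2 * π / (3 * k) with hξdef
  have hkR : (3 : ℝ) ≤ (k : ℝ) := by exact_mod_cast hk
  have hπ := Real.pi_pos
  have hkpos : (0:ℝ) < 3 * (k:ℝ) := by linarith
  have hξpos : 0 < ξ := by positivity
  have hξπ : ξ < π := by
    rw [hξdef, div_lt_iff₀ hkpos]
    nlinarith
  have h2π : 3 * (k : ℝ) * ξ = 2 * π := by
    rw [hξdef]; field_simp
  have hcosξpos : 0 < Real.cos ξ := Real.cos_pos_of_mem_Ioo
    ⟨by linarith, by rw [hξdef, div_lt_iff₀ hkpos]; nlinarith⟩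
  have hyn : 0 < ‖y‖ := lt_of_lt_of_le (by positivity) hy1
  have hzn : 0 < ‖z‖ := lt_of_lt_of_le (by positivity) hz1
  have hΔ : Real.cos (polarAngle z - polarAngle y) < Real.cos ξ := by
    rcases lt_or_gt_of_ne hij with hlt | hlt
    · have hji : (i : ℝ) + 1 ≤ (j : ℝ) := by exact_mod_cast hlt
      have hjk : (j : ℝ) + 1 ≤ (k : ℝ) := by exact_mod_cast hj
      apply aux_cos_lt hξpos hξπ
      · nlinarith
      · nlinarith
    · have hji : (j : ℝ) + 1 ≤ (i : ℝ) := by exact_mod_cast hlt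
      have hik : (i : ℝ) + 1 ≤ (k : ℝ) := by exact_mod_cast hi
      rw [← Real.cos_neg, neg_sub]
      apply aux_cos_lt hξpos hξπ
      · nlinarith
      · nlinarith
  have hinner : (inner ℝ z y : ℝ) ≤ ‖z‖ ^ 2 := by
    rw [aux_inner y z (norm_pos_iff.1 hyn) (norm_pos_iff.1 hzn)]
    have h2 : ‖y‖ * Real.cos ξ ≤ ‖z‖ :=
      (mul_le_mul_of_nonneg_right hy2 hcosξpos.le).trans hz1
    calc ‖z‖ * ‖y‖ * Real.cos (polarAngle z - polarAngle y)
        ≤ ‖z‖ * ‖y‖ * Real.cos ξ :=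
          mul_le_mul_of_nonneg_left hΔ.le (mul_nonneg (norm_nonneg z) (norm_nonneg y))
      _ = ‖z‖ * (‖y‖ * Real.cos ξ) := mul_assoc _ _ _
      _ ≤ ‖z‖ * ‖z‖ := mul_le_mul_of_nonneg_left h2 (norm_nonneg z)
      _ = ‖z‖ ^ 2 := (sq ‖z‖).symm
  have hsq : (‖y‖ / 2) ^ 2 ≤ ‖z - (1/2 : ℝ) • y‖ ^ 2 := by
    rw [norm_sub_sq_real, real_inner_smul_right, norm_smul]
    have h12 : ‖(1/2 : ℝ)‖ = 1/2 := by norm_num [Real.norm_eq_abs]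
    rw [h12]
    ring_nf
    ring_nf at hinner ⊢
    nlinarith [hinner]
  have hfin := Real.sqrt_le_sqrt hsq
  rwa [Real.sqrt_sq (by positivity), Real.sqrt_sq (norm_nonneg _)] at hfin
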